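/- arXiv:2206.01747 — 2 statements merged into one kernel-verified Lean document; each statement's English description precedes it below -/
import Mathlib

section
/- For the constant density kernel f(x,y) = p with p ∈ (0,1] and Poisson counting law K ~ Poisson(c) with c > 0 (so δ² = c), the degree correlation satisfies Corr(d(x), d(y)) = p for x ≠ y; that is, Cov(d(x), d(y)) = c p² and Var(d(x)) = Var(d(y)) = c p, so the Poisson random measure correlates the density field. -/
open MeasureTheory ProbabilityTheory

/-- The covariance `Cov(X,Y) = E[XY] - E[X]E[Y]` of two real random variables. -/
noncomputable def cov {Ω : Type*} [MeasurableSpace Ω] (μ : Measure Ω) (X Y : Ω → ℝ) : ℝ :=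
  (∫ ω, X ω * Y ω ∂μ) - (∫ ω, X ω ∂μ) * (∫ ω, Y ω ∂μ)

open scoped ENNReal

lemma aux_split {Ω β : Type*} [MeasurableSpace Ω] [MeasurableSpace β]
    (μ : Measure Ω) (K : Ω → ℕ) (hK : Measurable K) (V : Ω → β) (hV : Measurable V)
    (hind : IndepFun K V μ) (h : ℕ → β → ℝ≥0∞) (hh : ∀ k, Measurable (h k)) :
    ∫⁻ ω, h (K ω) (V ω) ∂μ = ∑' k, μ {ω | K ω = k} * ∫⁻ ω, h k (V ω) ∂μ := by
  have heq : ∀ ω, h (K ω) (V ω)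
      = ∑' k, (if K ω = k then (1:ℝ≥0∞) else 0) * h k (V ω) := by
    intro ω
    rw [tsum_eq_single (K ω) (by intro b hb; simp [Ne.symm hb])]
    simp
  calc ∫⁻ ω, h (K ω) (V ω) ∂μ
      = ∫⁻ ω, ∑' k, (if K ω = k then (1:ℝ≥0∞) else 0) * h k (V ω) ∂μ := by
        simp_rw [heq]
    _ = ∑' k, ∫⁻ ω, (if K ω = k then (1:ℝ≥0∞) else 0) * h k (V ω) ∂μ := by
        refine lintegral_tsum fun k => ?_
        exact (((measurable_from_top (f := fun n : ℕ => if n = k then (1:ℝ≥0∞) else 0)).comp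
          hK).mul ((hh k).comp hV)).aemeasurable
    _ = ∑' k, μ {ω | K ω = k} * ∫⁻ ω, h k (V ω) ∂μ := by
        refine tsum_congr fun k => ?_
        have hi : IndepFun (fun ω => if K ω = k then (1:ℝ≥0∞) else 0)
            (fun ω => h k (V ω)) μ :=
          hind.comp (measurable_from_top (f := fun n : ℕ => if n = k then (1:ℝ≥0∞) else 0))
            (hh k)
        have hm := lintegral_mul_eq_lintegral_mul_lintegral_of_indepFun
          (f := fun ω => if K ω = k then (1:ℝ≥0∞) else 0) (g := fun ω => h k (V ω))
          ((measurable_from_top (f := fun n : ℕ => if n = k then (1:ℝ≥0∞) else 0)).comp hK)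
          ((hh k).comp hV) hi
        simp only [Pi.mul_apply] at hm
        rw [hm]
        congr 1
        have : (fun ω => if K ω = k then (1:ℝ≥0∞) else 0)
            = Set.indicator {ω | K ω = k} (1 : Ω → ℝ≥0∞) := by
          ext ω; simp [Set.indicator_apply]
        rw [this]
        exact lintegral_indicator_one (hK (measurableSet_singleton k))

lemma aux_hr (c : ℝ) (hc : 0 < c) :
    HasSum (fun k : ℕ => Real.exp (-c) * c ^ k / (Nat.factorial k)) 1 := by
  have h := ProbabilityTheory.poissonPMFRealSum ⟨c, hc.le⟩
  exact h

lemma aux_hr1 (c : ℝ) (hc : 0 < c) :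
    HasSum (fun k : ℕ => (k : ℝ) * (Real.exp (-c) * c ^ k / (Nat.factorial k))) c := by
  set f : ℕ → ℝ := fun k => (k : ℝ) * (Real.exp (-c) * c ^ k / (Nat.factorial k)) with hf
  have h1 : HasSum (fun k => f (k + 1)) c := by
    have h := (aux_hr c hc).mul_left c
    rw [mul_one] at h
    convert h using 2 with k
    case e'_3 => rfl
    simp only [hf, Nat.factorial_succ]
    push_cast
    have h0 : (Nat.factorial k : ℝ) ≠ 0 := Nat.cast_ne_zero.mpr (Nat.factorial_ne_zero k)
    field_simp
    ring
  have := (hasSum_nat_add_iff (f := f) 1).mp h1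
  simpa [hf] using this

lemma aux_hr2 (c : ℝ) (hc : 0 < c) :
    HasSum (fun k : ℕ => ((k * (k - 1) : ℕ) : ℝ) * (Real.exp (-c) * c ^ k / (Nat.factorial k)))
      (c ^ 2) := by
  set f : ℕ → ℝ := fun k => ((k * (k - 1) : ℕ) : ℝ) * (Real.exp (-c) * c ^ k / (Nat.factorial k))
    with hf
  have h1 : HasSum (fun k => f (k + 2)) (c ^ 2) := by
    have h := (aux_hr c hc).mul_left (c ^ 2)
    rw [mul_one] at h
    convert h using 2 with k
    case e'_3 => rfl
    simp only [hf]
    have : (k + 2) * (k + 2 - 1) = (k + 2) * (k + 1) := rfl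
    rw [this, show k + 2 = (k + 1) + 1 from rfl, Nat.factorial_succ, Nat.factorial_succ]
    push_cast
    have h0 : (Nat.factorial k : ℝ) ≠ 0 := Nat.cast_ne_zero.mpr (Nat.factorial_ne_zero k)
    field_simp
    ring
  have := (hasSum_nat_add_iff (f := f) 2).mp h1
  simpa [hf, Finset.sum_range_succ] using this

lemma aux_base {Ω : Type*} [MeasurableSpace Ω] (μ : Measure Ω) (p : ℝ)
    (X : Ω → ℕ) (hXm : Measurable X) (hX1 : ∀ ω, X ω ≤ 1)
    (hXp : μ {ω | X ω = 1} = ENNReal.ofReal p) :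
    ∫⁻ ω, (X ω : ℝ≥0∞) ∂μ = ENNReal.ofReal p := by
  have h : (fun ω => (X ω : ℝ≥0∞)) = Set.indicator {ω | X ω = 1} (1 : Ω → ℝ≥0∞) := by
    ext ω
    rcases Nat.le_one_iff_eq_zero_or_eq_one.mp (hX1 ω) with h | h <;>
      simp [h, Set.indicator_apply]
  rw [h]
  exact (lintegral_indicator_one (hXm (measurableSet_singleton 1))).trans hXp

lemma aux_nat (k : ℕ) : ((k * (k - 1) : ℕ) : ℝ) + (k : ℝ) = (k : ℝ) * (k : ℝ) := by
  rcases k with _ | n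
  · simp
  · push_cast [Nat.succ_sub_one]
    ring

lemma aux_main {Ω : Type*} [MeasurableSpace Ω] (μ : Measure Ω) [IsProbabilityMeasure μ]
    (c : ℝ) (hc : 0 < c) (p : ℝ) (hp : p ∈ Set.Ioc (0:ℝ) 1)
    (K : Ω → ℕ) (hK : Measurable K)
    (hKpois : ∀ k : ℕ,
      μ {ω | K ω = k} = ENNReal.ofReal (Real.exp (-c) * c ^ k / (Nat.factorial k)))
    (X : ℕ → Ω → ℕ) (hXm : ∀ i, Measurable (X i)) (hX01 : ∀ i ω, X i ω ≤ 1)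
    (hXp : ∀ i, μ {ω | X i ω = 1} = ENNReal.ofReal p)
    (hXij : ∀ i j, i ≠ j → IndepFun (X i) (X j) μ)
    (hKX : IndepFun K (fun ω => fun i : ℕ => X i ω) μ) :
    Measurable (fun ω => ((∑ i ∈ Finset.range (K ω), X i ω : ℕ) : ℝ)) ∧
    (∫ ω, ((∑ i ∈ Finset.range (K ω), X i ω : ℕ) : ℝ) ∂μ = c * p) ∧
    MemLp (fun ω => ((∑ i ∈ Finset.range (K ω), X i ω : ℕ) : ℝ)) 2 μ ∧
    variance (fun ω => ((∑ i ∈ Finset.range (K ω), X i ω : ℕ) : ℝ)) μ = c * p := by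
  have hp0 : 0 < p := hp.1
  set r : ℕ → ℝ := fun k => Real.exp (-c) * c ^ k / (Nat.factorial k) with hr
  replace hKpois : ∀ k, μ {ω | K ω = k} = ENNReal.ofReal (r k) := hKpois
  have hrpos : ∀ k, 0 ≤ r k := fun k => by
    have := (Nat.factorial k); positivity
  set q : ℝ≥0∞ := ENNReal.ofReal p with hq
  have hVm : Measurable (fun ω => fun i : ℕ => X i ω) :=
    measurable_pi_lambda _ fun i => hXm i
  -- first moment, lintegral version
  have L1 : ∫⁻ ω, ((∑ i ∈ Finset.range (K ω), X i ω : ℕ) : ℝ≥0∞) ∂μ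
      = ENNReal.ofReal (c * p) := by
    have hs : ∫⁻ ω, ((∑ i ∈ Finset.range (K ω), X i ω : ℕ) : ℝ≥0∞) ∂μ
        = ∑' k, μ {ω | K ω = k} *
            ∫⁻ ω, ((∑ i ∈ Finset.range k, X i ω : ℕ) : ℝ≥0∞) ∂μ :=
      aux_split μ K hK (fun ω => fun i : ℕ => X i ω) hVm hKX
        (fun k v => ((∑ i ∈ Finset.range k, v i : ℕ) : ℝ≥0∞))
        (fun k => measurable_from_top.comp
          (Finset.measurable_sum _ fun i _ => measurable_pi_apply i))
    rw [hs]
    have hk1 : ∀ k : ℕ, ∫⁻ ω, ((∑ i ∈ Finset.range k, X i ω : ℕ) : ℝ≥0∞) ∂μ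
        = (k : ℝ≥0∞) * q := by
      intro k
      have hcast : ∀ ω : Ω, ((∑ i ∈ Finset.range k, X i ω : ℕ) : ℝ≥0∞)
          = ∑ i ∈ Finset.range k, (X i ω : ℝ≥0∞) := fun ω => Nat.cast_sum _ _
      simp_rw [hcast]
      rw [lintegral_finset_sum (f := fun i ω => (X i ω : ℝ≥0∞)) _
        fun i _ => measurable_from_top.comp (hXm i)]
      have : ∀ i ∈ Finset.range k, ∫⁻ ω, (X i ω : ℝ≥0∞) ∂μ = q :=
        fun i _ => aux_base μ p (X i) (hXm i) (hX01 i) (hXp i)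
      rw [Finset.sum_congr rfl this, Finset.sum_const, Finset.card_range, nsmul_eq_mul]
    have hHS : HasSum (fun k : ℕ => r k * ((k : ℝ) * p)) (c * p) := by
      have h := (aux_hr1 c hc).mul_right p
      convert h using 2 with k
      case e'_3 => rfl
      ring
    have key : ∀ k : ℕ, ENNReal.ofReal (r k) * ((k : ℝ≥0∞) * q)
        = ENNReal.ofReal (r k * ((k : ℝ) * p)) := by
      intro k
      rw [ENNReal.ofReal_mul (hrpos k), ENNReal.ofReal_mul (Nat.cast_nonneg k),
        ENNReal.ofReal_natCast]
    simp_rw [hk1, hKpois, key]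
    rw [← ENNReal.ofReal_tsum_of_nonneg (fun k => by positivity) hHS.summable, hHS.tsum_eq]
  -- second moment, lintegral version
  have L2 : ∫⁻ ω, ((∑ i ∈ Finset.range (K ω), X i ω : ℕ) : ℝ≥0∞)
        * ((∑ i ∈ Finset.range (K ω), X i ω : ℕ) : ℝ≥0∞) ∂μ
      = ENNReal.ofReal (c * p + c ^ 2 * (p * p)) := by
    have hs : ∫⁻ ω, ((∑ i ∈ Finset.range (K ω), X i ω : ℕ) : ℝ≥0∞)
          * ((∑ i ∈ Finset.range (K ω), X i ω : ℕ) : ℝ≥0∞) ∂μ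
        = ∑' k, μ {ω | K ω = k} *
            ∫⁻ ω, ((∑ i ∈ Finset.range k, X i ω : ℕ) : ℝ≥0∞)
              * ((∑ i ∈ Finset.range k, X i ω : ℕ) : ℝ≥0∞) ∂μ :=
      aux_split μ K hK (fun ω => fun i : ℕ => X i ω) hVm hKX
        (fun k v => ((∑ i ∈ Finset.range k, v i : ℕ) : ℝ≥0∞)
          * ((∑ i ∈ Finset.range k, v i : ℕ) : ℝ≥0∞))
        (fun k => (measurable_from_top.comp
            (Finset.measurable_sum _ fun i _ => measurable_pi_apply i)).fun_mul
          (measurable_from_top.comp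
            (Finset.measurable_sum _ fun i _ => measurable_pi_apply i)))
    rw [hs]
    have hij : ∀ i j : ℕ, ∫⁻ ω, (X i ω : ℝ≥0∞) * (X j ω : ℝ≥0∞) ∂μ
        = if i = j then q else q * q := by
      intro i j
      by_cases h : i = j
      · subst h
        rw [if_pos rfl]
        have hthis : ∀ ω, (X i ω : ℝ≥0∞) * (X i ω : ℝ≥0∞) = (X i ω : ℝ≥0∞) := by
          intro ω
          rcases Nat.le_one_iff_eq_zero_or_eq_one.mp (hX01 i ω) with h | h <;> simp [h]
        simp_rw [hthis]
        exact aux_base μ p (X i) (hXm i) (hX01 i) (hXp i)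
      · rw [if_neg h]
        have hind := (hXij i j h).comp
          (measurable_from_top (f := (Nat.cast : ℕ → ℝ≥0∞)))
          (measurable_from_top (f := (Nat.cast : ℕ → ℝ≥0∞)))
        have hm := lintegral_mul_eq_lintegral_mul_lintegral_of_indepFun
          (f := fun ω => (X i ω : ℝ≥0∞)) (g := fun ω => (X j ω : ℝ≥0∞))
          (measurable_from_top.comp (hXm i)) (measurable_from_top.comp (hXm j)) hind
        simp only [Pi.mul_apply] at hm
        rw [hm, aux_base μ p (X i) (hXm i) (hX01 i) (hXp i),
          aux_base μ p (X j) (hXm j) (hX01 j) (hXp j)]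
    have hk2 : ∀ k : ℕ, ∫⁻ ω, ((∑ i ∈ Finset.range k, X i ω : ℕ) : ℝ≥0∞)
          * ((∑ i ∈ Finset.range k, X i ω : ℕ) : ℝ≥0∞) ∂μ
        = (k : ℝ≥0∞) * (q + ((k - 1 : ℕ) : ℝ≥0∞) * (q * q)) := by
      intro k
      have hcast : ∀ ω : Ω, ((∑ i ∈ Finset.range k, X i ω : ℕ) : ℝ≥0∞)
            * ((∑ i ∈ Finset.range k, X i ω : ℕ) : ℝ≥0∞)
          = ∑ i ∈ Finset.range k, ∑ j ∈ Finset.range k,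
              (X i ω : ℝ≥0∞) * (X j ω : ℝ≥0∞) := by
        intro ω
        rw [Nat.cast_sum, Finset.sum_mul_sum]
      simp_rw [hcast]
      rw [lintegral_finset_sum
        (f := fun i ω => ∑ j ∈ Finset.range k, (X i ω : ℝ≥0∞) * (X j ω : ℝ≥0∞)) _
        fun i _ => Finset.measurable_sum _ fun j _ =>
          (measurable_from_top.comp (hXm i)).fun_mul (measurable_from_top.comp (hXm j))]
      have hinner : ∀ i ∈ Finset.range k,
          ∫⁻ ω, ∑ j ∈ Finset.range k, (X i ω : ℝ≥0∞) * (X j ω : ℝ≥0∞) ∂μ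
          = q + ((k - 1 : ℕ) : ℝ≥0∞) * (q * q) := by
        intro i hi
        rw [lintegral_finset_sum (f := fun j ω => (X i ω : ℝ≥0∞) * (X j ω : ℝ≥0∞)) _
          fun j _ =>
            (measurable_from_top.comp (hXm i)).fun_mul (measurable_from_top.comp (hXm j))]
        rw [Finset.sum_congr rfl fun j _ => hij i j]
        rw [← Finset.add_sum_erase _ _ hi, if_pos rfl]
        congr 1
        rw [Finset.sum_congr rfl fun j hj =>
          if_neg (Ne.symm (Finset.mem_erase.mp hj).1)]
        rw [Finset.sum_const, Finset.card_erase_of_mem hi, Finset.card_range, nsmul_eq_mul]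
      rw [Finset.sum_congr rfl hinner, Finset.sum_const, Finset.card_range, nsmul_eq_mul]
    have hHS : HasSum (fun k : ℕ => r k * ((k : ℝ) * (p + ((k - 1 : ℕ) : ℝ) * (p * p))))
        (c * p + c ^ 2 * (p * p)) := by
      have h := ((aux_hr1 c hc).mul_right p).add ((aux_hr2 c hc).mul_right (p * p))
      convert h using 2 with k
      case e'_3 => rfl
      have hck : ((k * (k - 1) : ℕ) : ℝ) = (k : ℝ) * ((k - 1 : ℕ) : ℝ) := by
        push_cast; ring
      simp only [hr, hck]
      ring
    have key : ∀ k : ℕ, ENNReal.ofReal (r k)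
          * ((k : ℝ≥0∞) * (q + ((k - 1 : ℕ) : ℝ≥0∞) * (q * q)))
        = ENNReal.ofReal (r k * ((k : ℝ) * (p + ((k - 1 : ℕ) : ℝ) * (p * p)))) := by
      intro k
      rw [ENNReal.ofReal_mul (hrpos k)]
      congr 1
      rw [ENNReal.ofReal_mul (Nat.cast_nonneg k), ENNReal.ofReal_natCast]
      congr 1
      rw [ENNReal.ofReal_add hp0.le (by positivity),
        ENNReal.ofReal_mul (Nat.cast_nonneg _), ENNReal.ofReal_natCast,
        ENNReal.ofReal_mul hp0.le]
    simp_rw [hk2, hKpois, key]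
    rw [← ENNReal.ofReal_tsum_of_nonneg (fun k => by positivity) hHS.summable, hHS.tsum_eq]
  -- measurability of the real-valued sum
  have hSm : Measurable (fun ω => ((∑ i ∈ Finset.range (K ω), X i ω : ℕ) : ℝ)) := by
    have : (fun ω => ((∑ i ∈ Finset.range (K ω), X i ω : ℕ) : ℝ))
        = fun ω => (fun (pr : Ω × ℕ) => ((∑ i ∈ Finset.range pr.2, X i pr.1 : ℕ) : ℝ)) (ω, K ω) :=
      rfl
    rw [this]
    have h1 : Measurable (fun pr : Ω × ℕ => ((∑ i ∈ Finset.range pr.2, X i pr.1 : ℕ) : ℝ)) :=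
      measurable_from_prod_countable_left fun k => by
        show Measurable fun ω => ((∑ i ∈ Finset.range k, X i ω : ℕ) : ℝ)
        exact (measurable_from_top (f := (Nat.cast : ℕ → ℝ))).comp
          (Finset.measurable_sum (Finset.range k) fun i _ => hXm i)
    exact h1.comp (measurable_id.prodMk hK)
  -- real first moment
  have hInt1 : ∫ ω, ((∑ i ∈ Finset.range (K ω), X i ω : ℕ) : ℝ) ∂μ = c * p := by
    rw [integral_eq_lintegral_of_nonneg_ae (ae_of_all μ fun ω => by positivity)
      hSm.aestronglyMeasurable]
    have hcast : ∀ ω : Ω, ENNReal.ofReal ((((∑ i ∈ Finset.range (K ω), X i ω : ℕ)) : ℝ))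
        = ((∑ i ∈ Finset.range (K ω), X i ω : ℕ) : ℝ≥0∞) := fun ω => ENNReal.ofReal_natCast _
    simp_rw [hcast]
    rw [L1, ENNReal.toReal_ofReal (by positivity)]
  -- Memℒp 2
  have hMem : MemLp (fun ω => ((∑ i ∈ Finset.range (K ω), X i ω : ℕ) : ℝ)) 2 μ := by
    rw [memLp_two_iff_integrable_sq hSm.aestronglyMeasurable]
    refine ⟨(hSm.pow_const 2).aestronglyMeasurable, ?_⟩
    rw [hasFiniteIntegral_iff_ofReal (ae_of_all μ fun ω => sq_nonneg _)]
    have hcast : ∀ ω : Ω, ENNReal.ofReal ((((∑ i ∈ Finset.range (K ω), X i ω : ℕ)) : ℝ) ^ 2)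
        = ((∑ i ∈ Finset.range (K ω), X i ω : ℕ) : ℝ≥0∞)
          * ((∑ i ∈ Finset.range (K ω), X i ω : ℕ) : ℝ≥0∞) := by
      intro ω
      rw [sq, ← Nat.cast_mul, ENNReal.ofReal_natCast, Nat.cast_mul]
    simp_rw [hcast]
    rw [L2]
    exact ENNReal.ofReal_lt_top
  refine ⟨hSm, hInt1, hMem, ?_⟩
  -- variance
  rw [variance_eq_sub hMem]
  have h2 : ∫ ω, ((fun ω => ((∑ i ∈ Finset.range (K ω), X i ω : ℕ) : ℝ)) ^ 2) ω ∂μ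
      = c * p + c ^ 2 * (p * p) := by
    have heq : ∀ ω : Ω, ((fun ω => ((∑ i ∈ Finset.range (K ω), X i ω : ℕ) : ℝ)) ^ 2) ω
        = ((∑ i ∈ Finset.range (K ω), X i ω : ℕ) : ℝ)
          * ((∑ i ∈ Finset.range (K ω), X i ω : ℕ) : ℝ) := by
      intro ω; simp [sq]
    simp_rw [heq]
    rw [integral_eq_lintegral_of_nonneg_ae (ae_of_all μ fun ω => by positivity)
      ((hSm.fun_mul hSm).aestronglyMeasurable)]
    have hcast : ∀ ω : Ω, ENNReal.ofReal ((((∑ i ∈ Finset.range (K ω), X i ω : ℕ)) : ℝ)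
          * (((∑ i ∈ Finset.range (K ω), X i ω : ℕ)) : ℝ))
        = ((∑ i ∈ Finset.range (K ω), X i ω : ℕ) : ℝ≥0∞)
          * ((∑ i ∈ Finset.range (K ω), X i ω : ℕ) : ℝ≥0∞) := by
      intro ω
      rw [← Nat.cast_mul, ENNReal.ofReal_natCast, Nat.cast_mul]
    simp_rw [hcast]
    rw [L2, ENNReal.toReal_ofReal (by positivity)]
  rw [h2, hInt1]
  ring


/-- For the constant density kernel `f(x,y) = p`, `p ∈ (0,1]`, and Poisson
counting law `K ~ Poisson(c)`, `c > 0` (so `δ² = c`), the degrees `d(x) = Σ_{i<K} Z_i` and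
`d(y) = Σ_{i<K} W_i` (for `x ≠ y`, built from i.i.d. pairs of independent Bernoulli(p)
variables, independent of `K`) satisfy `Cov(d(x), d(y)) = c p²`,
`Var(d(x)) = Var(d(y)) = c p`, and hence `Corr(d(x), d(y)) = p`: the Poisson random measure
correlates the density field. -/
theorem stmt_7 {Ω : Type*} [MeasurableSpace Ω] (μ : Measure Ω) [IsProbabilityMeasure μ]
    (c : ℝ) (hc : 0 < c) (p : ℝ) (hp : p ∈ Set.Ioc (0:ℝ) 1)
    (K : Ω → ℕ) (hK : Measurable K)
    (hKpois : ∀ k : ℕ,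
      μ {ω | K ω = k} = ENNReal.ofReal (Real.exp (-c) * c ^ k / (Nat.factorial k)))
    (Z W : ℕ → Ω → ℕ)
    (hZm : ∀ i, Measurable (Z i)) (hWm : ∀ i, Measurable (W i))
    (hZ01 : ∀ i ω, Z i ω ≤ 1) (hW01 : ∀ i ω, W i ω ≤ 1)
    (hZp : ∀ i, μ {ω | Z i ω = 1} = ENNReal.ofReal p)
    (hWp : ∀ i, μ {ω | W i ω = 1} = ENNReal.ofReal p)
    (hZW : ∀ i, IndepFun (Z i) (W i) μ)
    (hpairs : iIndepFun (m := fun _ : ℕ => (inferInstance : MeasurableSpace (ℕ × ℕ)))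
      (fun i ω => (Z i ω, W i ω)) μ)
    (hKindep : IndepFun K (fun ω => fun i : ℕ => (Z i ω, W i ω)) μ) :
    cov μ (fun ω => ((∑ i ∈ Finset.range (K ω), Z i ω : ℕ) : ℝ))
          (fun ω => ((∑ i ∈ Finset.range (K ω), W i ω : ℕ) : ℝ)) = c * p ^ 2 ∧
    variance (fun ω => ((∑ i ∈ Finset.range (K ω), Z i ω : ℕ) : ℝ)) μ = c * p ∧
    variance (fun ω => ((∑ i ∈ Finset.range (K ω), W i ω : ℕ) : ℝ)) μ = c * p ∧
    cov μ (fun ω => ((∑ i ∈ Finset.range (K ω), Z i ω : ℕ) : ℝ))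
          (fun ω => ((∑ i ∈ Finset.range (K ω), W i ω : ℕ) : ℝ))
      / Real.sqrt
          ((variance (fun ω => ((∑ i ∈ Finset.range (K ω), Z i ω : ℕ) : ℝ)) μ)
            * (variance (fun ω => ((∑ i ∈ Finset.range (K ω), W i ω : ℕ) : ℝ)) μ)) = p := by
  have hp0 : 0 < p := hp.1
  have hrpos : ∀ k : ℕ, 0 ≤ Real.exp (-c) * c ^ k / (Nat.factorial k) := fun k => by positivity
  -- independence facts
  have hZind : ∀ i j : ℕ, i ≠ j → IndepFun (Z i) (Z j) μ := fun i j h =>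
    (hpairs.indepFun h).comp measurable_fst measurable_fst
  have hWind : ∀ i j : ℕ, i ≠ j → IndepFun (W i) (W j) μ := fun i j h =>
    (hpairs.indepFun h).comp measurable_snd measurable_snd
  have hKZ : IndepFun K (fun ω => fun i : ℕ => Z i ω) μ :=
    hKindep.comp measurable_id
      (measurable_pi_lambda _ fun i => measurable_fst.comp (measurable_pi_apply i))
  have hKW : IndepFun K (fun ω => fun i : ℕ => W i ω) μ :=
    hKindep.comp measurable_id
      (measurable_pi_lambda _ fun i => measurable_snd.comp (measurable_pi_apply i))
  obtain ⟨hSm, IZ, MZ, VZ⟩ :=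
    aux_main μ c hc p hp K hK hKpois Z hZm hZ01 hZp hZind hKZ
  obtain ⟨hTm, IW, MW, VW⟩ :=
    aux_main μ c hc p hp K hK hKpois W hWm hW01 hWp hWind hKW
  have hVm : Measurable (fun ω => fun i : ℕ => (Z i ω, W i ω)) :=
    measurable_pi_lambda _ fun i => (hZm i).prodMk (hWm i)
  have hZWij : ∀ i j : ℕ, IndepFun (Z i) (W j) μ := by
    intro i j
    rcases eq_or_ne i j with h | h
    · subst h; exact hZW i
    · exact (hpairs.indepFun h).comp measurable_fst measurable_snd
  have hqij : ∀ i j : ℕ, ∫⁻ ω, (Z i ω : ℝ≥0∞) * (W j ω : ℝ≥0∞) ∂μ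
      = ENNReal.ofReal p * ENNReal.ofReal p := by
    intro i j
    have hind := (hZWij i j).comp
      (measurable_from_top (f := (Nat.cast : ℕ → ℝ≥0∞)))
      (measurable_from_top (f := (Nat.cast : ℕ → ℝ≥0∞)))
    have hm := lintegral_mul_eq_lintegral_mul_lintegral_of_indepFun
      (f := fun ω => (Z i ω : ℝ≥0∞)) (g := fun ω => (W j ω : ℝ≥0∞))
      (measurable_from_top.comp (hZm i)) (measurable_from_top.comp (hWm j)) hind
    simp only [Pi.mul_apply] at hm
    rw [hm, aux_base μ p (Z i) (hZm i) (hZ01 i) (hZp i),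
      aux_base μ p (W j) (hWm j) (hW01 j) (hWp j)]
  -- cross moment, lintegral version
  have LST : ∫⁻ ω, ((∑ i ∈ Finset.range (K ω), Z i ω : ℕ) : ℝ≥0∞)
        * ((∑ i ∈ Finset.range (K ω), W i ω : ℕ) : ℝ≥0∞) ∂μ
      = ENNReal.ofReal (c ^ 2 * (p * p) + c * (p * p)) := by
    have hs : ∫⁻ ω, ((∑ i ∈ Finset.range (K ω), Z i ω : ℕ) : ℝ≥0∞)
          * ((∑ i ∈ Finset.range (K ω), W i ω : ℕ) : ℝ≥0∞) ∂μ
        = ∑' k, μ {ω | K ω = k} *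
            ∫⁻ ω, ((∑ i ∈ Finset.range k, Z i ω : ℕ) : ℝ≥0∞)
              * ((∑ i ∈ Finset.range k, W i ω : ℕ) : ℝ≥0∞) ∂μ :=
      aux_split μ K hK (fun ω => fun i : ℕ => (Z i ω, W i ω)) hVm hKindep
        (fun k v => ((∑ i ∈ Finset.range k, (v i).1 : ℕ) : ℝ≥0∞)
          * ((∑ i ∈ Finset.range k, (v i).2 : ℕ) : ℝ≥0∞))
        (fun k => (measurable_from_top.comp (Finset.measurable_sum _ fun i _ =>
            measurable_fst.comp (measurable_pi_apply i))).fun_mul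
          (measurable_from_top.comp (Finset.measurable_sum _ fun i _ =>
            measurable_snd.comp (measurable_pi_apply i))))
    rw [hs]
    have hk : ∀ k : ℕ, ∫⁻ ω, ((∑ i ∈ Finset.range k, Z i ω : ℕ) : ℝ≥0∞)
          * ((∑ i ∈ Finset.range k, W i ω : ℕ) : ℝ≥0∞) ∂μ
        = (k : ℝ≥0∞) * ((k : ℝ≥0∞) * (ENNReal.ofReal p * ENNReal.ofReal p)) := by
      intro k
      have hcast : ∀ ω : Ω, ((∑ i ∈ Finset.range k, Z i ω : ℕ) : ℝ≥0∞)
            * ((∑ i ∈ Finset.range k, W i ω : ℕ) : ℝ≥0∞)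
          = ∑ i ∈ Finset.range k, ∑ j ∈ Finset.range k,
              (Z i ω : ℝ≥0∞) * (W j ω : ℝ≥0∞) := by
        intro ω
        rw [Nat.cast_sum, Nat.cast_sum, Finset.sum_mul_sum]
      simp_rw [hcast]
      rw [lintegral_finset_sum
        (f := fun i ω => ∑ j ∈ Finset.range k, (Z i ω : ℝ≥0∞) * (W j ω : ℝ≥0∞)) _
        fun i _ => Finset.measurable_sum _ fun j _ =>
          (measurable_from_top.comp (hZm i)).fun_mul (measurable_from_top.comp (hWm j))]
      have hinner : ∀ i ∈ Finset.range k,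
          ∫⁻ ω, ∑ j ∈ Finset.range k, (Z i ω : ℝ≥0∞) * (W j ω : ℝ≥0∞) ∂μ
          = (k : ℝ≥0∞) * (ENNReal.ofReal p * ENNReal.ofReal p) := by
        intro i _
        rw [lintegral_finset_sum (f := fun j ω => (Z i ω : ℝ≥0∞) * (W j ω : ℝ≥0∞)) _
          fun j _ => (measurable_from_top.comp (hZm i)).fun_mul (measurable_from_top.comp (hWm j))]
        rw [Finset.sum_congr rfl fun j _ => hqij i j, Finset.sum_const, Finset.card_range,
          nsmul_eq_mul]
      rw [Finset.sum_congr rfl hinner, Finset.sum_const, Finset.card_range, nsmul_eq_mul]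
    have hHS : HasSum (fun k : ℕ => (Real.exp (-c) * c ^ k / (Nat.factorial k))
          * ((k : ℝ) * ((k : ℝ) * (p * p))))
        (c ^ 2 * (p * p) + c * (p * p)) := by
      have h := ((aux_hr2 c hc).mul_right (p * p)).add ((aux_hr1 c hc).mul_right (p * p))
      convert h using 2 with k
      case e'_3 => rfl
      have h1 : (k : ℝ) * ((k : ℝ) * (p * p)) = (((k * (k - 1) : ℕ) : ℝ) + (k : ℝ)) * (p * p) := by
        rw [aux_nat k]; ring
      rw [h1]; ring
    have key : ∀ k : ℕ, ENNReal.ofReal (Real.exp (-c) * c ^ k / (Nat.factorial k))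
          * ((k : ℝ≥0∞) * ((k : ℝ≥0∞) * (ENNReal.ofReal p * ENNReal.ofReal p)))
        = ENNReal.ofReal ((Real.exp (-c) * c ^ k / (Nat.factorial k))
            * ((k : ℝ) * ((k : ℝ) * (p * p)))) := by
      intro k
      rw [ENNReal.ofReal_mul (hrpos k)]
      congr 1
      rw [ENNReal.ofReal_mul (Nat.cast_nonneg k), ENNReal.ofReal_natCast]
      congr 1
      rw [ENNReal.ofReal_mul (Nat.cast_nonneg k), ENNReal.ofReal_natCast,
        ENNReal.ofReal_mul hp0.le]
    simp_rw [hk, hKpois, key]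
    rw [← ENNReal.ofReal_tsum_of_nonneg (fun k => by positivity) hHS.summable, hHS.tsum_eq]
  -- cross moment, real version
  have IST : ∫ ω, ((∑ i ∈ Finset.range (K ω), Z i ω : ℕ) : ℝ)
        * ((∑ i ∈ Finset.range (K ω), W i ω : ℕ) : ℝ) ∂μ
      = c ^ 2 * (p * p) + c * (p * p) := by
    rw [integral_eq_lintegral_of_nonneg_ae (ae_of_all μ fun ω => by positivity)
      ((hSm.fun_mul hTm).aestronglyMeasurable)]
    have hcast : ∀ ω : Ω, ENNReal.ofReal ((((∑ i ∈ Finset.range (K ω), Z i ω : ℕ)) : ℝ)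
          * (((∑ i ∈ Finset.range (K ω), W i ω : ℕ)) : ℝ))
        = ((∑ i ∈ Finset.range (K ω), Z i ω : ℕ) : ℝ≥0∞)
          * ((∑ i ∈ Finset.range (K ω), W i ω : ℕ) : ℝ≥0∞) := by
      intro ω
      rw [← Nat.cast_mul, ENNReal.ofReal_natCast, Nat.cast_mul]
    simp_rw [hcast]
    rw [LST, ENNReal.toReal_ofReal (by positivity)]
  have hcov : cov μ (fun ω => ((∑ i ∈ Finset.range (K ω), Z i ω : ℕ) : ℝ))
      (fun ω => ((∑ i ∈ Finset.range (K ω), W i ω : ℕ) : ℝ)) = c * p ^ 2 := by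
    unfold cov
    rw [IST, IZ, IW]
    ring
  refine ⟨hcov, VZ, VW, ?_⟩
  rw [hcov, VZ, VW, Real.sqrt_mul_self (by positivity : (0:ℝ) ≤ c * p)]
  rw [div_eq_iff (by positivity : c * p ≠ 0)]
  ring
end

section
/- For the constant density kernel f(x,y) = p with p ∈ (0,1) and counting law with mean c > 0 and variance δ² > 0, the degree correlation for x ≠ y equals Corr(d(x), d(y)) = δ² p² / (c p + (δ² − c) p²) = δ² p / (c + (δ² − c) p), and for fixed c > 0 and p ∈ (0,1) this quantity is strictly increasing in δ²; in particular binomial counting (δ² < c) has reduced and negative binomial counting (δ² > c) has increased degree correlation relative to Poisson (δ² = c). -/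
open MeasureTheory ProbabilityTheory

section Aux
variable {Ω : Type*} [MeasurableSpace Ω] {μ : Measure Ω} [IsProbabilityMeasure μ]

lemma integrable_of_bdd {f : Ω → ℝ} (hf : Measurable f) (C : ℝ) (hC : ∀ ω, |f ω| ≤ C) :
    Integrable f μ :=
  Integrable.mono' (integrable_const C) hf.aestronglyMeasurable
    (Filter.Eventually.of_forall fun ω => by simpa [Real.norm_eq_abs] using hC ω)

omit [IsProbabilityMeasure μ] in
lemma bern_int {p : ℝ} (hp0 : 0 ≤ p) {X : Ω → ℕ} (hXm : Measurable X) (hX1 : ∀ ω, X ω ≤ 1)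
    (hXp : μ {ω | X ω = 1} = ENNReal.ofReal p) : ∫ ω, (X ω : ℝ) ∂μ = p := by
  have h : (fun ω => (X ω : ℝ)) = Set.indicator {ω | X ω = 1} (fun _ => (1:ℝ)) := by
    funext ω
    rcases Nat.le_one_iff_eq_zero_or_eq_one.mp (hX1 ω) with h | h <;>
      simp [Set.indicator, h]
  have hset : MeasurableSet {ω | X ω = 1} := hXm (measurableSet_singleton 1)
  rw [h, integral_indicator_const _ hset, measureReal_def, hXp]
  simp [ENNReal.toReal_ofReal hp0]

omit [IsProbabilityMeasure μ] in
lemma indep_integral_mul {f g : Ω → ℝ} (h : IndepFun f g μ) (hf : Integrable f μ)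
    (hg : Integrable g μ) :
    ∫ ω, f ω * g ω ∂μ = (∫ ω, f ω ∂μ) * ∫ ω, g ω ∂μ :=
  h.integral_mul_eq_mul_integral hf.1 hg.1

lemma hasSum_partition {K : Ω → ℕ} (hK : Measurable K) {X : Ω → ℝ} (hX : Integrable X μ)
    {α : Type*} [MeasurableSpace α] {V : Ω → α}
    (hind : IndepFun K V μ) (F : ℕ → α → ℝ) (hF : ∀ n, Measurable (F n))
    (hFi : ∀ n, Integrable (fun ω => F n (V ω)) μ)
    (hXF : ∀ ω, X ω = F (K ω) (V ω)) :
    HasSum (fun n => (μ {ω | K ω = n}).toReal * ∫ ω, F n (V ω) ∂μ) (∫ ω, X ω ∂μ) := by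
  have hs : ∀ n, MeasurableSet {ω | K ω = n} := fun n => hK (measurableSet_singleton n)
  have hU : (⋃ n, {ω | K ω = n}) = Set.univ := by ext ω; simp
  have hdisj : Pairwise (Function.onFun Disjoint fun n => {ω | K ω = n}) := by
    intro m n hmn
    simp only [Function.onFun, Set.disjoint_left]
    intro ω h1 h2
    exact hmn ((h1 : K ω = m).symm.trans h2)
  have h1 := hasSum_integral_iUnion hs hdisj (f := X) (by rw [hU]; exact hX.integrableOn)
  rw [hU, Measure.restrict_univ] at h1
  convert h1 using 2 with n
  · rfl
  rw [setIntegral_congr_fun (hs n) (fun ω hω => by rw [hXF ω, (hω : K ω = n)])]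
  rw [← integral_indicator (hs n)]
  have hg : Measurable (fun m : ℕ => if m = n then (1:ℝ) else 0) := measurable_of_countable _
  have heq : Set.indicator {ω | K ω = n} (fun ω => F n (V ω)) =
      fun ω => (if K ω = n then (1:ℝ) else 0) * F n (V ω) := by
    funext ω
    by_cases h : K ω = n <;> simp [Set.indicator, h]
  rw [heq]
  have hcomp : IndepFun (fun ω => if K ω = n then (1:ℝ) else 0) (fun ω => F n (V ω)) μ :=
    hind.comp hg (hF n)
  have hmul : ∫ ω, (if K ω = n then (1:ℝ) else 0) * F n (V ω) ∂μ =
      (∫ ω, (if K ω = n then (1:ℝ) else 0) ∂μ) * ∫ ω, F n (V ω) ∂μ :=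
    indep_integral_mul hcomp
      (integrable_of_bdd (hg.comp hK) 1 (fun ω => by by_cases h : K ω = n <;> simp [h]))
      (hFi n)
  rw [hmul]
  have : ∫ ω, (if K ω = n then (1:ℝ) else 0) ∂μ = (μ {ω | K ω = n}).toReal := by
    have heq2 : (fun ω => if K ω = n then (1:ℝ) else 0) =
        Set.indicator {ω | K ω = n} (fun _ => (1:ℝ)) := by
      funext ω; by_cases h : K ω = n <;> simp [Set.indicator, h]
    rw [heq2, integral_indicator_const _ (hs n), measureReal_def]
    simp
  rw [this]

end Aux

/-- For the constant density kernel `f(x,y) = p`, `p ∈ (0,1)`, and a counting law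
with mean `c > 0` and variance `δ² > 0`, the degree correlation for `x ≠ y` equals
`Corr(d(x), d(y)) = δ² p² / (c p + (δ² - c) p²) = δ² p / (c + (δ² - c) p)`, and for fixed
`c > 0`, `p ∈ (0,1)` this quantity is strictly increasing in `δ²`; in particular binomial
counting (`δ² < c`) has reduced, and negative binomial counting (`δ² > c`) increased, degree
correlation relative to Poisson (`δ² = c`, correlation `p`). -/
theorem stmt_8 {Ω : Type*} [MeasurableSpace Ω] (μ : Measure Ω) [IsProbabilityMeasure μ]
    (p : ℝ) (hp : p ∈ Set.Ioo (0:ℝ) 1)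
    (K : Ω → ℕ) (hK : Measurable K)
    (c δ2 : ℝ) (hc : 0 < c) (hδ2 : 0 < δ2)
    (hKc : ∫ ω, (K ω : ℝ) ∂μ = c)
    (hK2 : MemLp (fun ω => (K ω : ℝ)) 2 μ)
    (hKvar : variance (fun ω => (K ω : ℝ)) μ = δ2)
    (Z W : ℕ → Ω → ℕ)
    (hZm : ∀ i, Measurable (Z i)) (hWm : ∀ i, Measurable (W i))
    (hZ01 : ∀ i ω, Z i ω ≤ 1) (hW01 : ∀ i ω, W i ω ≤ 1)
    (hZp : ∀ i, μ {ω | Z i ω = 1} = ENNReal.ofReal p)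
    (hWp : ∀ i, μ {ω | W i ω = 1} = ENNReal.ofReal p)
    (hZW : ∀ i, IndepFun (Z i) (W i) μ)
    (hpairs : iIndepFun
      (fun i ω => (Z i ω, W i ω)) μ)
    (hKindep : IndepFun K (fun ω => fun i : ℕ => (Z i ω, W i ω)) μ) :
    (cov μ (fun ω => ((∑ i ∈ Finset.range (K ω), Z i ω : ℕ) : ℝ))
           (fun ω => ((∑ i ∈ Finset.range (K ω), W i ω : ℕ) : ℝ))
        / Real.sqrt
            ((variance (fun ω => ((∑ i ∈ Finset.range (K ω), Z i ω : ℕ) : ℝ)) μ)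
              * (variance (fun ω => ((∑ i ∈ Finset.range (K ω), W i ω : ℕ) : ℝ)) μ))
      = δ2 * p ^ 2 / (c * p + (δ2 - c) * p ^ 2)) ∧
    δ2 * p ^ 2 / (c * p + (δ2 - c) * p ^ 2) = δ2 * p / (c + (δ2 - c) * p) ∧
    StrictMonoOn (fun t : ℝ => t * p / (c + (t - c) * p)) (Set.Ioi 0) ∧
    (δ2 < c → δ2 * p / (c + (δ2 - c) * p) < p) ∧
    (c < δ2 → p < δ2 * p / (c + (δ2 - c) * p)) := by
  obtain ⟨hp0, hp1⟩ := hp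
  have hp0' : (0:ℝ) ≤ p := hp0.le
  -- notation
  set D : Ω → ℝ := fun ω => ((∑ i ∈ Finset.range (K ω), Z i ω : ℕ) : ℝ) with hD
  set D' : Ω → ℝ := fun ω => ((∑ i ∈ Finset.range (K ω), W i ω : ℕ) : ℝ) with hD'
  set V : Ω → (ℕ → ℕ × ℕ) := fun ω => fun i => (Z i ω, W i ω) with hVdef
  have hcast : Measurable (Nat.cast : ℕ → ℝ) := measurable_of_countable _
  have hZrm : ∀ i, Measurable fun ω => (Z i ω : ℝ) := fun i => hcast.comp (hZm i)
  have hWrm : ∀ i, Measurable fun ω => (W i ω : ℝ) := fun i => hcast.comp (hWm i)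
  have hintZ : ∀ i, Integrable (fun ω => (Z i ω : ℝ)) μ := fun i =>
    integrable_of_bdd (hZrm i) 1 (fun ω => by
      rw [abs_of_nonneg (Nat.cast_nonneg _)]; exact_mod_cast hZ01 i ω)
  have hintW : ∀ i, Integrable (fun ω => (W i ω : ℝ)) μ := fun i =>
    integrable_of_bdd (hWrm i) 1 (fun ω => by
      rw [abs_of_nonneg (Nat.cast_nonneg _)]; exact_mod_cast hW01 i ω)
  have hEZ : ∀ i, ∫ ω, (Z i ω : ℝ) ∂μ = p := fun i => bern_int hp0' (hZm i) (hZ01 i) (hZp i)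
  have hEW : ∀ i, ∫ ω, (W i ω : ℝ) ∂μ = p := fun i => bern_int hp0' (hWm i) (hW01 i) (hWp i)
  -- independence of components
  have hfstm : Measurable (fun q : ℕ × ℕ => ((q.1 : ℝ))) := measurable_of_countable _
  have hsndm : Measurable (fun q : ℕ × ℕ => ((q.2 : ℝ))) := measurable_of_countable _
  have hindZZ : ∀ i j, i ≠ j →
      IndepFun (fun ω => (Z i ω : ℝ)) (fun ω => (Z j ω : ℝ)) μ := fun i j hij =>
    (hpairs.indepFun hij).comp hfstm hfstm
  have hindWW : ∀ i j, i ≠ j →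
      IndepFun (fun ω => (W i ω : ℝ)) (fun ω => (W j ω : ℝ)) μ := fun i j hij =>
    (hpairs.indepFun hij).comp hsndm hsndm
  have hindZW : ∀ i j, IndepFun (fun ω => (Z i ω : ℝ)) (fun ω => (W j ω : ℝ)) μ := by
    intro i j
    rcases eq_or_ne i j with rfl | hij
    · exact (hZW i).comp hcast hcast
    · exact (hpairs.indepFun hij).comp hfstm hsndm
  -- pair expectations
  have hEZW : ∀ i j, ∫ ω, (Z i ω : ℝ) * (W j ω : ℝ) ∂μ = p * p := fun i j => by
    rw [indep_integral_mul (hindZW i j) (hintZ i) (hintW j), hEZ i, hEW j]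
  have sq_eq : ∀ (X : ℕ → Ω → ℕ), (∀ i ω, X i ω ≤ 1) →
      ∀ i ω, ((X i ω : ℝ)) * ((X i ω : ℝ)) = (X i ω : ℝ) := by
    intro X hX1 i ω
    rcases Nat.le_one_iff_eq_zero_or_eq_one.mp (hX1 i ω) with h | h <;> simp [h]
  have hEZZ : ∀ i j, ∫ ω, (Z i ω : ℝ) * (Z j ω : ℝ) ∂μ = if i = j then p else p^2 := by
    intro i j
    rcases eq_or_ne i j with rfl | hij
    · simp only [sq_eq Z hZ01 i, if_pos rfl]
      exact hEZ i
    · rw [if_neg hij, indep_integral_mul (hindZZ i j hij) (hintZ i) (hintZ j), hEZ i, hEZ j]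
      ring
  have hEWW : ∀ i j, ∫ ω, (W i ω : ℝ) * (W j ω : ℝ) ∂μ = if i = j then p else p^2 := by
    intro i j
    rcases eq_or_ne i j with rfl | hij
    · simp only [sq_eq W hW01 i, if_pos rfl]
      exact hEW i
    · rw [if_neg hij, indep_integral_mul (hindWW i j hij) (hintW i) (hintW j), hEW i, hEW j]
      ring
  -- fixed-n moments
  set FS : ℕ → (ℕ → ℕ × ℕ) → ℝ := fun n v => ∑ i ∈ Finset.range n, ((v i).1 : ℝ) with hFSdef
  set FT : ℕ → (ℕ → ℕ × ℕ) → ℝ := fun n v => ∑ i ∈ Finset.range n, ((v i).2 : ℝ) with hFTdef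
  have hFSm : ∀ n, Measurable (FS n) := fun n =>
    Finset.measurable_sum _ fun i _ => hcast.comp (measurable_fst.comp (measurable_pi_apply i))
  have hFTm : ∀ n, Measurable (FT n) := fun n =>
    Finset.measurable_sum _ fun i _ => hcast.comp (measurable_snd.comp (measurable_pi_apply i))
  have hFSV : ∀ n ω, FS n (V ω) = ∑ i ∈ Finset.range n, (Z i ω : ℝ) := fun n ω => rfl
  have hFTV : ∀ n ω, FT n (V ω) = ∑ i ∈ Finset.range n, (W i ω : ℝ) := fun n ω => rfl
  have hEFS : ∀ n, ∫ ω, FS n (V ω) ∂μ = n * p := by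
    intro n
    simp only [hFSV]
    rw [integral_finset_sum _ (fun i _ => hintZ i)]
    simp [hEZ, mul_comm]
  have hEFT : ∀ n, ∫ ω, FT n (V ω) ∂μ = n * p := by
    intro n
    simp only [hFTV]
    rw [integral_finset_sum _ (fun i _ => hintW i)]
    simp [hEW, mul_comm]
  have hintZW : ∀ i j, Integrable (fun ω => (Z i ω : ℝ) * (W j ω : ℝ)) μ := fun i j =>
    integrable_of_bdd ((hZrm i).mul (hWrm j)) 1 (fun ω => by
      rw [abs_mul, abs_of_nonneg (Nat.cast_nonneg _), abs_of_nonneg (Nat.cast_nonneg _)]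
      have h1 : ((Z i ω : ℝ)) ≤ 1 := by exact_mod_cast hZ01 i ω
      have h2 : ((W j ω : ℝ)) ≤ 1 := by exact_mod_cast hW01 j ω
      nlinarith [Nat.cast_nonneg (α := ℝ) (Z i ω), Nat.cast_nonneg (α := ℝ) (W j ω)])
  have hintZZ : ∀ i j, Integrable (fun ω => (Z i ω : ℝ) * (Z j ω : ℝ)) μ := fun i j =>
    integrable_of_bdd ((hZrm i).mul (hZrm j)) 1 (fun ω => by
      rw [abs_mul, abs_of_nonneg (Nat.cast_nonneg _), abs_of_nonneg (Nat.cast_nonneg _)]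
      have h1 : ((Z i ω : ℝ)) ≤ 1 := by exact_mod_cast hZ01 i ω
      have h2 : ((Z j ω : ℝ)) ≤ 1 := by exact_mod_cast hZ01 j ω
      nlinarith [Nat.cast_nonneg (α := ℝ) (Z i ω), Nat.cast_nonneg (α := ℝ) (Z j ω)])
  have hintWW : ∀ i j, Integrable (fun ω => (W i ω : ℝ) * (W j ω : ℝ)) μ := fun i j =>
    integrable_of_bdd ((hWrm i).mul (hWrm j)) 1 (fun ω => by
      rw [abs_mul, abs_of_nonneg (Nat.cast_nonneg _), abs_of_nonneg (Nat.cast_nonneg _)]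
      have h1 : ((W i ω : ℝ)) ≤ 1 := by exact_mod_cast hW01 i ω
      have h2 : ((W j ω : ℝ)) ≤ 1 := by exact_mod_cast hW01 j ω
      nlinarith [Nat.cast_nonneg (α := ℝ) (W i ω), Nat.cast_nonneg (α := ℝ) (W j ω)])
  have hEFST : ∀ n, ∫ ω, FS n (V ω) * FT n (V ω) ∂μ = (n:ℝ)^2 * p^2 := by
    intro n
    have h1 : ∀ ω, FS n (V ω) * FT n (V ω) =
        ∑ i ∈ Finset.range n, ∑ j ∈ Finset.range n, (Z i ω : ℝ) * (W j ω : ℝ) := by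
      intro ω
      rw [hFSV, hFTV, Finset.sum_mul_sum]
    simp only [h1]
    rw [integral_finset_sum _ (fun i _ => integrable_finset_sum _ (fun j _ => hintZW i j))]
    have : ∀ i ∈ Finset.range n,
        ∫ ω, ∑ j ∈ Finset.range n, (Z i ω : ℝ) * (W j ω : ℝ) ∂μ = n * (p * p) := by
      intro i _
      rw [integral_finset_sum _ (fun j _ => hintZW i j)]
      simp [hEZW, mul_comm]
    rw [Finset.sum_congr rfl this]
    simp
    ring
  have sum_diag : ∀ n : ℕ, (∑ i ∈ Finset.range n, ∑ j ∈ Finset.range n,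
      (if i = j then p else p^2)) = n * p + ((n:ℝ)^2 - n) * p^2 := by
    intro n
    have h1 : ∀ i ∈ Finset.range n, (∑ j ∈ Finset.range n, (if i = j then p else p^2))
        = n * p^2 + (p - p^2) := by
      intro i hi
      have : ∀ j, (if i = j then p else p^2) = p^2 + (if i = j then p - p^2 else 0) := by
        intro j; by_cases h : i = j <;> simp [h]
      simp only [this]
      rw [Finset.sum_add_distrib, Finset.sum_const, Finset.card_range, Finset.sum_ite_eq,
        if_pos hi]
      simp [nsmul_eq_mul]
    rw [Finset.sum_congr rfl h1]
    simp [Finset.sum_const, Finset.card_range, nsmul_eq_mul]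
    ring
  have hEFSS : ∀ n, ∫ ω, FS n (V ω) * FS n (V ω) ∂μ = n * p + ((n:ℝ)^2 - n) * p^2 := by
    intro n
    have h1 : ∀ ω, FS n (V ω) * FS n (V ω) =
        ∑ i ∈ Finset.range n, ∑ j ∈ Finset.range n, (Z i ω : ℝ) * (Z j ω : ℝ) := by
      intro ω
      rw [hFSV, Finset.sum_mul_sum]
    simp only [h1]
    rw [integral_finset_sum _ (fun i _ => integrable_finset_sum _ (fun j _ => hintZZ i j))]
    rw [← sum_diag n]
    refine Finset.sum_congr rfl fun i _ => ?_
    rw [integral_finset_sum _ (fun j _ => hintZZ i j)]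
    exact Finset.sum_congr rfl fun j _ => hEZZ i j
  have hEFTT : ∀ n, ∫ ω, FT n (V ω) * FT n (V ω) ∂μ = n * p + ((n:ℝ)^2 - n) * p^2 := by
    intro n
    have h1 : ∀ ω, FT n (V ω) * FT n (V ω) =
        ∑ i ∈ Finset.range n, ∑ j ∈ Finset.range n, (W i ω : ℝ) * (W j ω : ℝ) := by
      intro ω
      rw [hFTV, Finset.sum_mul_sum]
    simp only [h1]
    rw [integral_finset_sum _ (fun i _ => integrable_finset_sum _ (fun j _ => hintWW i j))]
    rw [← sum_diag n]
    refine Finset.sum_congr rfl fun i _ => ?_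
    rw [integral_finset_sum _ (fun j _ => hintWW i j)]
    exact Finset.sum_congr rfl fun j _ => hEWW i j
  -- measurability and integrability of D, D'
  have hDNat : ∀ (X : ℕ → Ω → ℕ), (∀ i, Measurable (X i)) →
      Measurable (fun ω => ∑ i ∈ Finset.range (K ω), X i ω) := by
    intro X hXm
    apply measurable_to_countable'
    intro m
    have : (fun ω => ∑ i ∈ Finset.range (K ω), X i ω) ⁻¹' {m} =
        ⋃ n, ({ω | K ω = n} ∩ {ω | ∑ i ∈ Finset.range n, X i ω = m}) := by
      ext ω
      simp only [Set.mem_preimage, Set.mem_singleton_iff, Set.mem_iUnion, Set.mem_inter_iff,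
        Set.mem_setOf_eq]
      constructor
      · intro h; exact ⟨K ω, rfl, h⟩
      · rintro ⟨n, h1, h2⟩; rw [h1]; exact h2
    rw [this]
    exact MeasurableSet.iUnion fun n => (hK (measurableSet_singleton n)).inter
      ((Finset.measurable_sum _ (fun i _ => hXm i)) (measurableSet_singleton m))
  have hDm : Measurable D := hcast.comp (hDNat Z hZm)
  have hD'm : Measurable D' := hcast.comp (hDNat W hWm)
  have hDle : ∀ ω, D ω ≤ (K ω : ℝ) := by
    intro ω
    have : (∑ i ∈ Finset.range (K ω), Z i ω) ≤ K ω := by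
      calc (∑ i ∈ Finset.range (K ω), Z i ω) ≤ ∑ i ∈ Finset.range (K ω), 1 :=
            Finset.sum_le_sum fun i _ => hZ01 i ω
        _ = K ω := by simp
    show ((∑ i ∈ Finset.range (K ω), Z i ω : ℕ) : ℝ) ≤ (K ω : ℝ)
    exact_mod_cast this
  have hD'le : ∀ ω, D' ω ≤ (K ω : ℝ) := by
    intro ω
    have : (∑ i ∈ Finset.range (K ω), W i ω) ≤ K ω := by
      calc (∑ i ∈ Finset.range (K ω), W i ω) ≤ ∑ i ∈ Finset.range (K ω), 1 :=
            Finset.sum_le_sum fun i _ => hW01 i ω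
        _ = K ω := by simp
    show ((∑ i ∈ Finset.range (K ω), W i ω : ℕ) : ℝ) ≤ (K ω : ℝ)
    exact_mod_cast this
  have hD0 : ∀ ω, 0 ≤ D ω := fun ω => Nat.cast_nonneg _
  have hD'0 : ∀ ω, 0 ≤ D' ω := fun ω => Nat.cast_nonneg _
  have hD2 : MemLp D 2 μ :=
    hK2.of_le hDm.aestronglyMeasurable (Filter.Eventually.of_forall fun ω => by
      rw [Real.norm_eq_abs, Real.norm_eq_abs, abs_of_nonneg (hD0 ω),
        abs_of_nonneg (Nat.cast_nonneg _)]
      exact hDle ω)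
  have hD'2 : MemLp D' 2 μ :=
    hK2.of_le hD'm.aestronglyMeasurable (Filter.Eventually.of_forall fun ω => by
      rw [Real.norm_eq_abs, Real.norm_eq_abs, abs_of_nonneg (hD'0 ω),
        abs_of_nonneg (Nat.cast_nonneg _)]
      exact hD'le ω)
  have hDint : Integrable D μ := hD2.integrable one_le_two
  have hD'int : Integrable D' μ := hD'2.integrable one_le_two
  have hKsq : Integrable (fun ω => (K ω : ℝ)^2) μ := hK2.integrable_sq
  have hprod_int : ∀ (A B : Ω → ℝ), Measurable A → Measurable B → (∀ ω, 0 ≤ A ω) →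
      (∀ ω, 0 ≤ B ω) → (∀ ω, A ω ≤ (K ω : ℝ)) → (∀ ω, B ω ≤ (K ω : ℝ)) →
      Integrable (fun ω => A ω * B ω) μ := by
    intro A B hA hB hA0 hB0 hAle hBle
    refine Integrable.mono' hKsq (hA.mul hB).aestronglyMeasurable
      (Filter.Eventually.of_forall fun ω => ?_)
    rw [Real.norm_eq_abs, abs_of_nonneg (mul_nonneg (hA0 ω) (hB0 ω)), pow_two]
    exact mul_le_mul (hAle ω) (hBle ω) (hB0 ω) (Nat.cast_nonneg _)
  have hDDint : Integrable (fun ω => D ω * D' ω) μ :=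
    hprod_int D D' hDm hD'm hD0 hD'0 hDle hD'le
  have hDDsq : Integrable (fun ω => D ω * D ω) μ := hprod_int D D hDm hDm hD0 hD0 hDle hDle
  have hD'Dsq : Integrable (fun ω => D' ω * D' ω) μ :=
    hprod_int D' D' hD'm hD'm hD'0 hD'0 hD'le hD'le
  have hKint : Integrable (fun ω => (K ω : ℝ)) μ := hK2.integrable one_le_two
  -- hasSum decompositions
  set Pn : ℕ → ℝ := fun n => (μ {ω | K ω = n}).toReal with hPn
  have hFSVi : ∀ n, Integrable (fun ω => FS n (V ω)) μ := fun n =>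
    integrable_of_bdd ((hFSm n).comp (measurable_pi_lambda _
      (fun i => (hZm i).prodMk (hWm i)))) n (fun ω => by
      rw [hFSV, abs_of_nonneg (Finset.sum_nonneg fun i _ => Nat.cast_nonneg _)]
      calc (∑ i ∈ Finset.range n, (Z i ω : ℝ)) ≤ ∑ i ∈ Finset.range n, 1 :=
            Finset.sum_le_sum fun i _ => by exact_mod_cast hZ01 i ω
        _ = n := by simp)
  have hFTVi : ∀ n, Integrable (fun ω => FT n (V ω)) μ := fun n =>
    integrable_of_bdd ((hFTm n).comp (measurable_pi_lambda _
      (fun i => (hZm i).prodMk (hWm i)))) n (fun ω => by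
      rw [hFTV, abs_of_nonneg (Finset.sum_nonneg fun i _ => Nat.cast_nonneg _)]
      calc (∑ i ∈ Finset.range n, (W i ω : ℝ)) ≤ ∑ i ∈ Finset.range n, 1 :=
            Finset.sum_le_sum fun i _ => by exact_mod_cast hW01 i ω
        _ = n := by simp)
  have hprodFi : ∀ (G H : ℕ → (ℕ → ℕ × ℕ) → ℝ), (∀ n, Measurable (G n)) →
      (∀ n, Measurable (H n)) → (∀ n, Integrable (fun ω => G n (V ω)) μ) →
      (∀ n, Integrable (fun ω => H n (V ω)) μ) → True := fun _ _ _ _ _ _ => trivial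
  have hVm : Measurable V := measurable_pi_lambda _ (fun i => (hZm i).prodMk (hWm i))
  have hFSTi : ∀ n, Integrable (fun ω => FS n (V ω) * FT n (V ω)) μ := fun n =>
    integrable_of_bdd (((hFSm n).comp hVm).mul ((hFTm n).comp hVm)) ((n:ℝ) * n) (fun ω => by
      have h1 : 0 ≤ FS n (V ω) := by
        rw [hFSV]; exact Finset.sum_nonneg fun i _ => Nat.cast_nonneg _
      have h2 : 0 ≤ FT n (V ω) := by
        rw [hFTV]; exact Finset.sum_nonneg fun i _ => Nat.cast_nonneg _
      have h3 : FS n (V ω) ≤ n := by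
        rw [hFSV]
        calc (∑ i ∈ Finset.range n, (Z i ω : ℝ)) ≤ ∑ i ∈ Finset.range n, 1 :=
              Finset.sum_le_sum fun i _ => by exact_mod_cast hZ01 i ω
          _ = n := by simp
      have h4 : FT n (V ω) ≤ n := by
        rw [hFTV]
        calc (∑ i ∈ Finset.range n, (W i ω : ℝ)) ≤ ∑ i ∈ Finset.range n, 1 :=
              Finset.sum_le_sum fun i _ => by exact_mod_cast hW01 i ω
          _ = n := by simp
      rw [abs_of_nonneg (mul_nonneg h1 h2)]
      exact mul_le_mul h3 h4 h2 (Nat.cast_nonneg _))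
  have hFSSi : ∀ n, Integrable (fun ω => FS n (V ω) * FS n (V ω)) μ := fun n =>
    integrable_of_bdd (((hFSm n).comp hVm).mul ((hFSm n).comp hVm)) ((n:ℝ) * n) (fun ω => by
      have h1 : 0 ≤ FS n (V ω) := by
        rw [hFSV]; exact Finset.sum_nonneg fun i _ => Nat.cast_nonneg _
      have h3 : FS n (V ω) ≤ n := by
        rw [hFSV]
        calc (∑ i ∈ Finset.range n, (Z i ω : ℝ)) ≤ ∑ i ∈ Finset.range n, 1 :=
              Finset.sum_le_sum fun i _ => by exact_mod_cast hZ01 i ω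
          _ = n := by simp
      rw [abs_of_nonneg (mul_nonneg h1 h1)]
      exact mul_le_mul h3 h3 h1 (Nat.cast_nonneg _))
  have hFTTi : ∀ n, Integrable (fun ω => FT n (V ω) * FT n (V ω)) μ := fun n =>
    integrable_of_bdd (((hFTm n).comp hVm).mul ((hFTm n).comp hVm)) ((n:ℝ) * n) (fun ω => by
      have h1 : 0 ≤ FT n (V ω) := by
        rw [hFTV]; exact Finset.sum_nonneg fun i _ => Nat.cast_nonneg _
      have h3 : FT n (V ω) ≤ n := by
        rw [hFTV]
        calc (∑ i ∈ Finset.range n, (W i ω : ℝ)) ≤ ∑ i ∈ Finset.range n, 1 :=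
              Finset.sum_le_sum fun i _ => by exact_mod_cast hW01 i ω
          _ = n := by simp
      rw [abs_of_nonneg (mul_nonneg h1 h1)]
      exact mul_le_mul h3 h3 h1 (Nat.cast_nonneg _))
  -- hasSum decompositions via partition on K
  have hSumK : HasSum (fun n => Pn n * n) c := by
    have h := hasSum_partition hK hKint hKindep (fun n _ => (n:ℝ))
      (fun n => measurable_const) (fun n => integrable_const _) (fun ω => rfl)
    simpa [hKc] using h
  have hK2int : ∫ ω, (K ω : ℝ)^2 ∂μ = δ2 + c^2 := by
    have h := variance_eq_sub hK2
    simp only [Pi.pow_apply] at h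
    rw [hKvar, hKc] at h
    linarith
  have hSumK2 : HasSum (fun n => Pn n * (n:ℝ)^2) (δ2 + c^2) := by
    have h := hasSum_partition hK hKsq hKindep (fun n _ => (n:ℝ)^2)
      (fun n => measurable_const) (fun n => integrable_const _) (fun ω => rfl)
    simpa [hK2int] using h
  have hSumD : HasSum (fun n => Pn n * ((n:ℝ) * p)) (∫ ω, D ω ∂μ) := by
    have h := hasSum_partition hK hDint hKindep FS hFSm hFSVi
      (fun ω => by rw [hFSV]; exact Nat.cast_sum _ _)
    simpa only [hEFS] using h
  have hSumD' : HasSum (fun n => Pn n * ((n:ℝ) * p)) (∫ ω, D' ω ∂μ) := by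
    have h := hasSum_partition hK hD'int hKindep FT hFTm hFTVi
      (fun ω => by rw [hFTV]; exact Nat.cast_sum _ _)
    simpa only [hEFT] using h
  have hSumDD : HasSum (fun n => Pn n * ((n:ℝ)^2 * p^2)) (∫ ω, D ω * D' ω ∂μ) := by
    have h := hasSum_partition hK hDDint hKindep (fun n v => FS n v * FT n v)
      (fun n => (hFSm n).mul (hFTm n)) hFSTi
      (fun ω => by simp only [hFSV, hFTV, hD, hD', Nat.cast_sum])
    simpa only [hEFST] using h
  have hSumD2 : HasSum (fun n => Pn n * ((n:ℝ) * p + ((n:ℝ)^2 - n) * p^2))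
      (∫ ω, D ω * D ω ∂μ) := by
    have h := hasSum_partition hK hDDsq hKindep (fun n v => FS n v * FS n v)
      (fun n => (hFSm n).mul (hFSm n)) hFSSi
      (fun ω => by simp only [hFSV, hD, Nat.cast_sum])
    simpa only [hEFSS] using h
  have hSumD'2 : HasSum (fun n => Pn n * ((n:ℝ) * p + ((n:ℝ)^2 - n) * p^2))
      (∫ ω, D' ω * D' ω ∂μ) := by
    have h := hasSum_partition hK hD'Dsq hKindep (fun n v => FT n v * FT n v)
      (fun n => (hFTm n).mul (hFTm n)) hFTTi
      (fun ω => by simp only [hFTV, hD', Nat.cast_sum])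
    simpa only [hEFTT] using h
  -- extracting moment values
  have hED : ∫ ω, D ω ∂μ = c * p := by
    have h := hSumK.mul_right p
    have he : (fun n => Pn n * n * p) = fun n => Pn n * ((n:ℝ) * p) := by funext n; ring
    rw [he] at h
    exact hSumD.unique h
  have hED' : ∫ ω, D' ω ∂μ = c * p := by
    have h := hSumK.mul_right p
    have he : (fun n => Pn n * n * p) = fun n => Pn n * ((n:ℝ) * p) := by funext n; ring
    rw [he] at h
    exact hSumD'.unique h
  have hEDD : ∫ ω, D ω * D' ω ∂μ = (δ2 + c^2) * p^2 := by
    have h := hSumK2.mul_right (p^2)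
    have he : (fun n => Pn n * (n:ℝ)^2 * p^2) = fun n => Pn n * ((n:ℝ)^2 * p^2) := by
      funext n; ring
    rw [he] at h
    exact hSumDD.unique h
  have hED2 : ∫ ω, D ω * D ω ∂μ = c * (p - p^2) + (δ2 + c^2) * p^2 := by
    have h := (hSumK.mul_right (p - p^2)).add (hSumK2.mul_right (p^2))
    have he : (fun n => Pn n * n * (p - p^2) + Pn n * (n:ℝ)^2 * p^2) =
        fun n => Pn n * ((n:ℝ) * p + ((n:ℝ)^2 - n) * p^2) := by funext n; ring
    rw [he] at h
    exact hSumD2.unique h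
  have hED'2 : ∫ ω, D' ω * D' ω ∂μ = c * (p - p^2) + (δ2 + c^2) * p^2 := by
    have h := (hSumK.mul_right (p - p^2)).add (hSumK2.mul_right (p^2))
    have he : (fun n => Pn n * n * (p - p^2) + Pn n * (n:ℝ)^2 * p^2) =
        fun n => Pn n * ((n:ℝ) * p + ((n:ℝ)^2 - n) * p^2) := by funext n; ring
    rw [he] at h
    exact hSumD'2.unique h
  -- covariance and variance
  have hcov : cov μ D D' = δ2 * p^2 := by
    unfold cov
    rw [hEDD, hED, hED']
    ring
  have hvarD : variance D μ = c * p + (δ2 - c) * p^2 := by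
    have h := variance_eq_sub hD2
    simp only [Pi.pow_apply] at h
    have h2 : ∫ ω, D ω ^ 2 ∂μ = ∫ ω, D ω * D ω ∂μ := by
      congr 1; funext ω; ring
    rw [h2, hED2, hED] at h
    rw [h]; ring
  have hvarD' : variance D' μ = c * p + (δ2 - c) * p^2 := by
    have h := variance_eq_sub hD'2
    simp only [Pi.pow_apply] at h
    have h2 : ∫ ω, D' ω ^ 2 ∂μ = ∫ ω, D' ω * D' ω ∂μ := by
      congr 1; funext ω; ring
    rw [h2, hED'2, hED'] at h
    rw [h]; ring
  have hVr0 : 0 < c * p + (δ2 - c) * p^2 := by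
    have h1 : c * p + (δ2 - c) * p^2 = c * p * (1 - p) + δ2 * p^2 := by ring
    rw [h1]
    exact add_pos (mul_pos (mul_pos hc hp0) (by linarith)) (mul_pos hδ2 (pow_pos hp0 2))
  have hden0 : 0 < c + (δ2 - c) * p := by
    have h1 : c + (δ2 - c) * p = c * (1 - p) + δ2 * p := by ring
    rw [h1]
    exact add_pos (mul_pos hc (by linarith)) (mul_pos hδ2 hp0)
  clear * - hp0 hp1 hc hδ2 hcov hvarD hvarD' hVr0 hden0
  refine ⟨?_, ?_, ?_, ?_, ?_⟩
  · rw [hcov, hvarD, hvarD', Real.sqrt_mul_self hVr0.le]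
  · rw [div_eq_div_iff hVr0.ne' hden0.ne']
    ring
  · intro a ha b hb hab
    have haa : (0:ℝ) < a := ha
    have hbb : (0:ℝ) < b := hb
    have hda : 0 < c + (a - c) * p := by nlinarith
    have hdb : 0 < c + (b - c) * p := by nlinarith
    show a * p / (c + (a - c) * p) < b * p / (c + (b - c) * p)
    rw [div_lt_div_iff₀ hda hdb]
    nlinarith [mul_pos (mul_pos hc hp0) (mul_pos (sub_pos.mpr hab) (sub_pos.mpr hp1))]
  · intro h
    rw [div_lt_iff₀ hden0]
    nlinarith [mul_pos (sub_pos.mpr h) (mul_pos hp0 (sub_pos.mpr hp1))]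
  · intro h
    rw [lt_div_iff₀ hden0]
    nlinarith [mul_pos (sub_pos.mpr h) (mul_pos hp0 (sub_pos.mpr hp1))]
end
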